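/- arXiv:2506.22070 — 2 statements merged into one kernel-verified Lean document; each statement's English description precedes it below -/
import Mathlib

section
/- Let a, c, d, k, m, p, q, r be positive real numbers with cp > mq, set λ = m/(cp − mq), and assume r > d + aλ. Then there exists a unique pair (u, v) of positive real numbers satisfying r/(1 + k·v) − d − a·u − p·v/(1 + q·u + v) = 0 and −m + c·p·u/(1 + q·u + v) = 0; moreover this pair satisfies u = λ·v + λ. -/
set_option maxHeartbeats 800000


/-- Existence and uniqueness of the positive constant equilibrium of the
predator–prey system with fear effect and Beddington–DeAngelis response,
together with the relation `u = λ v + λ` where `λ = m / (c p - m q)`. -/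
theorem stmt_0 (a c d k m p q r : ℝ)
    (ha : 0 < a) (hc : 0 < c) (hd : 0 < d) (hk : 0 < k) (hm : 0 < m)
    (hp : 0 < p) (hq : 0 < q) (hr : 0 < r)
    (hcp : m * q < c * p)
    (hrd : d + a * (m / (c * p - m * q)) < r) :
    (∃! uv : ℝ × ℝ, 0 < uv.1 ∧ 0 < uv.2 ∧
      r / (1 + k * uv.2) - d - a * uv.1 - p * uv.2 / (1 + q * uv.1 + uv.2) = 0 ∧
      -m + c * p * uv.1 / (1 + q * uv.1 + uv.2) = 0) ∧
    (∀ u v : ℝ, 0 < u → 0 < v →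
      r / (1 + k * v) - d - a * u - p * v / (1 + q * u + v) = 0 →
      -m + c * p * u / (1 + q * u + v) = 0 →
      u = (m / (c * p - m * q)) * v + m / (c * p - m * q)) := by
  have hs : 0 < c * p - m * q := by linarith
  set s := c * p - m * q with hs_def
  set L := m / s with hL_def
  have hL : 0 < L := div_pos hm hs
  set B := s / c with hB_def
  have hB : 0 < B := div_pos hs hc
  set F : ℝ → ℝ := fun v => r / (1 + k * v) - (d + a * L * (1 + v) + B * (v / (1 + v)))
    with hF_def
  -- F is strictly decreasing on [0, ∞)
  have hanti : StrictAntiOn F (Set.Ici 0) := by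
    intro x hx y hy hxy
    simp only [hF_def]
    have hx0 : (0:ℝ) ≤ x := hx
    have hy0 : (0:ℝ) ≤ y := hy
    have h1x : (0:ℝ) < 1 + k * x := by nlinarith
    have h1y : (0:ℝ) < 1 + k * y := by nlinarith
    have h2 : r / (1 + k * y) ≤ r / (1 + k * x) := by
      apply div_le_div_of_nonneg_left hr.le h1x
      nlinarith
    have h3 : x / (1 + x) < y / (1 + y) := by
      rw [div_lt_div_iff₀ (by linarith) (by linarith)]
      nlinarith
    have h4 : B * (x / (1 + x)) < B * (y / (1 + y)) := by
      exact mul_lt_mul_of_pos_left h3 hB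
    have h5 : a * L * (1 + x) < a * L * (1 + y) := by nlinarith [mul_pos ha hL]
    linarith
  -- F v equals the first equation with u = L*(1+v)
  have hFeq : ∀ v : ℝ, 0 < v →
      F v = r / (1 + k * v) - d - a * (L * (1 + v))
        - p * v / (1 + q * (L * (1 + v)) + v) := by
    intro v hv
    have h1v : (0:ℝ) < 1 + v := by linarith
    have h1kv : (0:ℝ) < 1 + k * v := by nlinarith
    have hDv : (0:ℝ) < 1 + q * (L * (1 + v)) + v := by
      have : 0 < q * (L * (1 + v)) := by positivity
      linarith
    simp only [hF_def, hB_def, hL_def]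
    field_simp
    ring
  -- key: any positive solution satisfies u = L*(1+v) and F v = 0
  have key : ∀ u v : ℝ, 0 < u → 0 < v →
      r / (1 + k * v) - d - a * u - p * v / (1 + q * u + v) = 0 →
      -m + c * p * u / (1 + q * u + v) = 0 →
      u = L * (1 + v) ∧ F v = 0 := by
    intro u v hu hv e1 e2
    have hD : (0:ℝ) < 1 + q * u + v := by nlinarith
    have e2' : c * p * u = m * (1 + q * u + v) := by
      have h : c * p * u / (1 + q * u + v) = m := by linarith
      rw [div_eq_iff (ne_of_gt hD)] at h
      linarith
    have hu' : u = L * (1 + v) := by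
      rw [hL_def]
      rw [div_mul_eq_mul_div, eq_div_iff (ne_of_gt hs), hs_def]
      nlinarith [e2']
    refine ⟨hu', ?_⟩
    rw [hFeq v hv, ← hu']
    exact e1
  -- F 0 > 0
  have hF0 : 0 < F 0 := by
    simp only [hF_def]
    norm_num
    linarith
  -- choose v0 with F v0 < 0
  obtain ⟨v0, hv0, haLv0⟩ : ∃ v0 : ℝ, 0 < v0 ∧ a * L * v0 = r + a * L := by
    refine ⟨(r + a * L) / (a * L), by positivity, ?_⟩
    field_simp
  have hFv0 : F v0 < 0 := by
    simp only [hF_def]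
    have h1 : r / (1 + k * v0) ≤ r := by
      apply div_le_self hr.le
      nlinarith [mul_pos hk hv0]
    have h2 : 0 < B * (v0 / (1 + v0)) := by positivity
    have h3 : 0 < a * L := mul_pos ha hL
    have h4 : a * L * (1 + v0) = a * L + (r + a * L) := by
      rw [mul_add, mul_one, haLv0]
    linarith
  -- continuity of F on [0, v0]
  have hcont : ContinuousOn F (Set.Icc 0 v0) := by
    simp only [hF_def]
    apply ContinuousOn.sub
    · exact ContinuousOn.div continuousOn_const (by fun_prop)
        (fun x hx => ne_of_gt (by nlinarith [hx.1]))
    · apply ContinuousOn.add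
      · exact ContinuousOn.add continuousOn_const (by fun_prop)
      · exact ContinuousOn.mul continuousOn_const
          (ContinuousOn.div (by fun_prop) (by fun_prop)
            (fun x hx => ne_of_gt (by nlinarith [hx.1])))
  -- IVT
  obtain ⟨v, hvmem, hFv⟩ : ∃ v ∈ Set.Icc (0:ℝ) v0, F v = 0 := by
    have hsub := intermediate_value_Icc' hv0.le hcont
    have h0mem : (0:ℝ) ∈ Set.Icc (F v0) (F 0) := ⟨hFv0.le, hF0.le⟩
    obtain ⟨v, hv, hFv⟩ := hsub h0mem
    exact ⟨v, hv, hFv⟩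
  have hvpos : 0 < v := by
    rcases lt_or_eq_of_le hvmem.1 with h | h
    · exact h
    · exfalso; rw [← h] at hFv; linarith
  have h1v : (0:ℝ) < 1 + v := by linarith
  have hupos : 0 < L * (1 + v) := by positivity
  have hDv : (0:ℝ) < 1 + q * (L * (1 + v)) + v := by nlinarith
  -- the candidate satisfies the second equation
  have hDeq : c * p * (L * (1 + v)) = m * (1 + q * (L * (1 + v)) + v) := by
    rw [hL_def]
    field_simp
    rw [hs_def]
    ring
  have he2 : -m + c * p * (L * (1 + v)) / (1 + q * (L * (1 + v)) + v) = 0 := by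
    have h : c * p * (L * (1 + v)) / (1 + q * (L * (1 + v)) + v) = m := by
      rw [div_eq_iff (ne_of_gt hDv)]
      linarith
    linarith
  have he1 : r / (1 + k * v) - d - a * (L * (1 + v))
      - p * v / (1 + q * (L * (1 + v)) + v) = 0 := by
    rw [← hFeq v hvpos]
    exact hFv
  constructor
  · refine ⟨(L * (1 + v), v), ⟨hupos, hvpos, he1, he2⟩, ?_⟩
    rintro ⟨u', v'⟩ ⟨hu'1, hv'1, e1', e2'⟩
    obtain ⟨huv', hFv'⟩ := key u' v' hu'1 hv'1 e1' e2'
    have hv'0 : v' ∈ Set.Ici (0:ℝ) := le_of_lt hv'1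
    have hvI : v ∈ Set.Ici (0:ℝ) := le_of_lt hvpos
    have hveq : v' = v := hanti.injOn hv'0 hvI (by rw [hFv', hFv])
    have : u' = L * (1 + v) := by rw [huv', hveq]
    exact Prod.ext this hveq
  · intro u' v' hu'1 hv'1 e1' e2'
    obtain ⟨huv', _⟩ := key u' v' hu'1 hv'1 e1' e2'
    rw [huv']
    ring
end

section
/- Let a, c, d, k, m, p, q, r be positive real numbers with r > d and m ≥ cp(r − d)/a. If u ≥ 0 and v ≥ 0 satisfy u·(r/(1 + k·v) − d − a·u − p·v/(1 + q·u + v)) = 0 and v·(−m + c·p·u/(1 + q·u + v)) = 0, then either (u, v) = (0, 0) or (u, v) = ((r − d)/a, 0). -/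
/-- If `r > d` and `m ≥ c p (r - d) / a`, the only nonnegative constant solutions of the
system are `(0,0)` and `((r-d)/a, 0)`. -/
theorem stmt_2 (a c d k m p q r : ℝ)
    (ha : 0 < a) (hc : 0 < c) (hd : 0 < d) (hk : 0 < k) (hm : 0 < m)
    (hp : 0 < p) (hq : 0 < q) (hr : 0 < r)
    (hrd : d < r) (hmge : c * p * (r - d) / a ≤ m)
    (u v : ℝ) (hu : 0 ≤ u) (hv : 0 ≤ v)
    (h1 : u * (r / (1 + k * v) - d - a * u - p * v / (1 + q * u + v)) = 0)
    (h2 : v * (-m + c * p * u / (1 + q * u + v)) = 0) :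
    (u = 0 ∧ v = 0) ∨ (u = (r - d) / a ∧ v = 0) := by
  have hD : 0 < 1 + q * u + v := by positivity
  have hD1 : 1 < 1 + q * u + v ∨ u = 0 ∨ v = 0 := by
    rcases eq_or_lt_of_le hu with h | h
    · exact Or.inr (Or.inl h.symm)
    · left; nlinarith
  rcases eq_or_lt_of_le hv with hv0 | hv0
  · -- v = 0
    rw [← hv0] at h1
    norm_num at h1
    rcases h1 with h | h
    · exact Or.inl ⟨h, hv0.symm⟩
    · refine Or.inr ⟨?_, hv0.symm⟩
      field_simp
      linarith
  · -- v > 0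
    have h2' : -m + c * p * u / (1 + q * u + v) = 0 := by
      rcases mul_eq_zero.mp h2 with h | h
      · exact absurd h (ne_of_gt hv0)
      · exact h
    have hmu : c * p * u / (1 + q * u + v) = m := by linarith
    rcases eq_or_lt_of_le hu with hu0 | hu0
    · exfalso
      rw [← hu0] at hmu
      simp at hmu
      rcases hmu with h | h | h <;> nlinarith
    · exfalso
      have h1' : r / (1 + k * v) - d - a * u - p * v / (1 + q * u + v) = 0 := by
        rcases mul_eq_zero.mp h1 with h | h
        · exact absurd h (ne_of_gt hu0)
        · exact h
      have hkv : 0 < 1 + k * v := by positivity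
      have hle : a * u ≤ r - d := by
        have h3 : r / (1 + k * v) ≤ r := by
          rw [div_le_iff₀ hkv]; nlinarith [mul_nonneg (mul_nonneg hk.le hv) hr.le]
        have h4 : 0 ≤ p * v / (1 + q * u + v) := by positivity
        linarith
      have hlt : c * p * u / (1 + q * u + v) < c * p * u := by
        apply div_lt_self (by positivity)
        nlinarith
      have : c * p * u ≤ c * p * (r - d) / a := by
        rw [le_div_iff₀ ha]; nlinarith
      linarith
end
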